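/- If a configuration x on nodes 0..N is legitimate and node 0 fires (x[0] = x[N], i.e., j = N+1 or j = 0 in the legitimate form, so all nodes equal a - requiring the configuration to be constant), then after the step the new configuration is legitimate with j = 1; conversely if 1 ≤ j ≤ N and node j fires, the result is legitimate with parameter j+1. -/

import Mathlib

/-- Predecessor node on the ring (anti-clockwise neighbour); node 0's neighbour is handled separately. -/
def ringPred (N : ℕ) (i : Fin (N + 1)) : Fin (N + 1) :=
  ⟨i.val - 1, Nat.lt_of_le_of_lt (Nat.sub_le _ _) i.isLt⟩

/-- Node `i` is privileged in configuration `x`. -/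
def Privileged (N K : ℕ) (x : Fin (N + 1) → ZMod K) (i : Fin (N + 1)) : Prop :=
  (i.val = 0 ∧ x 0 = x (Fin.last N)) ∨ (0 < i.val ∧ x i ≠ x (ringPred N i))

/-- The value node `i` writes when it fires. -/
def fireVal (N K : ℕ) (x : Fin (N + 1) → ZMod K) (i : Fin (N + 1)) : ZMod K :=
  if i.val = 0 then x 0 + 1 else x (ringPred N i)

/-- One step of Dijkstra's protocol: a single privileged node fires. -/
def Step (N K : ℕ) (x x' : Fin (N + 1) → ZMod K) : Prop :=
  ∃ i : Fin (N + 1), Privileged N K x i ∧ x' = Function.update x i (fireVal N K x i)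

/-- An execution: each configuration is obtained from the previous by one step. -/
def Execution (N K : ℕ) (x : ℕ → Fin (N + 1) → ZMod K) : Prop :=
  ∀ t : ℕ, Step N K (x t) (x (t + 1))

/-- Node `i` fires at time `t` in execution `x`. -/
def Fires (N K : ℕ) (x : ℕ → Fin (N + 1) → ZMod K) (i : Fin (N + 1)) (t : ℕ) : Prop :=
  Privileged N K (x t) i ∧ x (t + 1) = Function.update (x t) i (fireVal N K (x t) i)

/-- Fairness: every continuously privileged node eventually fires. -/
def Fair (N K : ℕ) (x : ℕ → Fin (N + 1) → ZMod K) : Prop :=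
  ∀ (i : Fin (N + 1)) (t : ℕ), (∀ s, t ≤ s → Privileged N K (x s) i) → ∃ s, t ≤ s ∧ Fires N K x i s

/-- Legitimate configuration with explicit parameters `(a, j)`. -/
def LegitimateP (N K : ℕ) (a : ZMod K) (j : ℕ) (x : Fin (N + 1) → ZMod K) : Prop :=
  j ≤ N + 1 ∧ (∀ i : Fin (N + 1), i.val < j → x i = a) ∧
    (∀ i : Fin (N + 1), j ≤ i.val → x i = a - 1)

/-- Legitimate configuration. -/
def Legitimate (N K : ℕ) (x : Fin (N + 1) → ZMod K) : Prop :=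
  ∃ (a : ZMod K) (j : ℕ), LegitimateP N K a j x

/-- Firing in a legitimate configuration with parameters (a, j): if the configuration is
constant (j = 0 or j = N+1), node 0 is uniquely privileged and firing yields parameter j = 1;
if 1 ≤ j ≤ N, node j is uniquely privileged and firing yields parameters (a, j+1). -/
theorem legitimate_step_parameters (N K : ℕ) (hN : 1 ≤ N) (hK : 2 ≤ K)
    (a : ZMod K) (j : ℕ) (x : Fin (N + 1) → ZMod K) (h : LegitimateP N K a j x) :
    ((j = 0 ∨ j = N + 1) →
      (∀ i : Fin (N + 1), Privileged N K x i ↔ i = 0) ∧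
      ∃ a' : ZMod K, LegitimateP N K a' 1 (Function.update x 0 (x 0 + 1))) ∧
    (∀ (_ : 1 ≤ j) (hjN : j ≤ N),
      (∀ i : Fin (N + 1), Privileged N K x i ↔ i = ⟨j, Nat.lt_succ_of_le hjN⟩) ∧
      LegitimateP N K a (j + 1)
        (Function.update x ⟨j, Nat.lt_succ_of_le hjN⟩
          (x (ringPred N ⟨j, Nat.lt_succ_of_le hjN⟩)))) := by
  obtain ⟨hj, hlt, hge⟩ := h
  haveI : Fact (1 < K) := ⟨hK⟩
  have hane : a - 1 ≠ a := by
    intro heq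
    exact (one_ne_zero : (1 : ZMod K) ≠ 0) (sub_eq_self.mp heq)
  constructor
  · rintro hc
    have hconst : ∀ i : Fin (N + 1), x i = x 0 := by
      intro i
      rcases hc with rfl | rfl
      · rw [hge i (Nat.zero_le _), hge 0 (Nat.zero_le _)]
      · rw [hlt i i.isLt, hlt 0 (Nat.succ_pos N)]
    constructor
    · intro i
      constructor
      · rintro (⟨h0, _⟩ | ⟨hpos, hne⟩)
        · exact Fin.ext h0
        · exact absurd ((hconst i).trans (hconst _).symm) hne
      · rintro rfl
        exact Or.inl ⟨rfl, (hconst (Fin.last N)).symm⟩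
    · refine ⟨x 0 + 1, Nat.le_add_left 1 N, ?_, ?_⟩
      · intro i hi
        have hi0 : i = 0 := Fin.ext (Nat.lt_one_iff.mp hi)
        subst hi0
        simp
      · intro i hi
        have hne : i ≠ 0 := by
          intro h0; rw [h0] at hi; simp at hi
        rw [Function.update_of_ne hne, hconst i]
        ring
  · intro hj1 hjN
    set jf : Fin (N + 1) := ⟨j, Nat.lt_succ_of_le hjN⟩ with hjf
    have hxj : x jf = a - 1 := hge jf (le_refl j)
    have hxpred : x (ringPred N jf) = a := hlt _ (by simp [ringPred, hjf]; omega)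
    have heqsame : ∀ i : Fin (N + 1), 0 < i.val → i ≠ jf → x i = x (ringPred N i) := by
      intro i hpos hnej
      have hvne : i.val ≠ j := fun h => hnej (Fin.ext h)
      rcases Nat.lt_or_ge i.val j with hlt' | hge'
      · rw [hlt i hlt', hlt (ringPred N i) (by simp [ringPred]; omega)]
      · have hgt : j < i.val := lt_of_le_of_ne hge' (Ne.symm hvne)
        rw [hge i hge', hge (ringPred N i) (by simp [ringPred]; omega)]
    constructor
    · intro i
      constructor
      · rintro (⟨h0, heq⟩ | ⟨hpos, hne⟩)
        · exfalso
          have h00 : x 0 = a := hlt 0 (by simp; omega)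
          have hl : x (Fin.last N) = a - 1 := hge _ (by simpa using hjN)
          rw [h00, hl] at heq
          exact hane heq.symm
        · by_contra hne2
          exact hne (heqsame i hpos hne2)
      · rintro rfl
        refine Or.inr ⟨hj1, ?_⟩
        rw [hxj, hxpred]
        exact hane
    · refine ⟨by omega, ?_, ?_⟩
      · intro i hi
        by_cases hij : i = jf
        · subst hij
          rw [Function.update_self, hxpred]
        · have hvne : i.val ≠ j := fun h => hij (Fin.ext h)
          rw [Function.update_of_ne hij]
          exact hlt i (by omega)
      · intro i hi
        have hij : i ≠ jf := by
          intro h; rw [h] at hi; simp [hjf] at hi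
        rw [Function.update_of_ne hij]
        exact hge i (by omega)
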